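/- Let S be a finite semigroup, φ : A⁺ → S surjective, and let ≡_φ be the Karnofsky–Rhodes congruence (u ≡_φ v iff φ(u)=φ(v) and p_u, p_v have the same transition edges in Γ_φ). Let π : A⁺/≡_φ → S be the induced projection. Then for every idempotent e of S, the subsemigroup π⁻¹(e) of A⁺/≡_φ satisfies the identity xyz = xz. -/
import Mathlib


variable {A S : Type*}

/-- Image of a word under the extension of `φ` to the free monoid, in `S¹ = WithOne S`. -/
def phiStar [Semigroup S] (φ : A → S) (w : List A) : WithOne S :=
  (w.map fun a => (φ a : WithOne S)).prod

/-- `φ` induces a surjective homomorphism `A⁺ → S`. -/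
def PlusSurj [Semigroup S] (φ : A → S) : Prop :=
  ∀ s : S, ∃ w : List A, w ≠ [] ∧ phiStar φ w = (s : WithOne S)

/-- An edge `((s₁,t₁), a, (s₂,t₂))` of the two-sided Cayley graph `Γ_φ`. -/
def IsEdge [Semigroup S] (φ : A → S)
    (e : (WithOne S × WithOne S) × A × (WithOne S × WithOne S)) : Prop :=
  e.1.1 * (φ e.2.1 : WithOne S) = e.2.2.1 ∧ e.1.2 = (φ e.2.1 : WithOne S) * e.2.2.2

/-- There is a path labeled `w` from `p` to `q` in `Γ_φ`. -/
def HasPath [Semigroup S] (φ : A → S) (p q : WithOne S × WithOne S) (w : List A) : Prop :=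
  p.1 * phiStar φ w = q.1 ∧ p.2 = phiStar φ w * q.2

/-- There is a (possibly empty) path from `p` to `q` in `Γ_φ`. -/
def Reach [Semigroup S] (φ : A → S) (p q : WithOne S × WithOne S) : Prop :=
  ∃ w : List A, HasPath φ p q w

/-- `p` and `q` lie in the same strongly connected component of `Γ_φ`. -/
def SameSCC [Semigroup S] (φ : A → S) (p q : WithOne S × WithOne S) : Prop :=
  Reach φ p q ∧ Reach φ q p

/-- `p` is a vertex of the canonical path `p_u` of the word `u` in `Γ_φ`. -/
def OnPath [Semigroup S] (φ : A → S) (u : List A) (p : WithOne S × WithOne S) : Prop :=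
  ∃ u₁ u₂ : List A, u = u₁ ++ u₂ ∧ p = (phiStar φ u₁, phiStar φ u₂)

/-- The paths `p_u` and `p_v` meet the same strongly connected components of `Γ_φ`,
i.e. `C(p_u) = C(p_v)`. -/
def SameComponents [Semigroup S] (φ : A → S) (u v : List A) : Prop :=
  (∀ p, OnPath φ u p → ∃ q, OnPath φ v q ∧ SameSCC φ p q) ∧
  (∀ q, OnPath φ v q → ∃ p, OnPath φ u p ∧ SameSCC φ p q)

/-- The two-sided connected congruence `u ≈_φ v`. -/
def ConnCong [Semigroup S] (φ : A → S) (u v : List A) : Prop :=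
  phiStar φ u = phiStar φ v ∧ SameComponents φ u v

/-- `e` is an edge traversed by the canonical path `p_u` in `Γ_φ`. -/
def EdgeOfPath [Semigroup S] (φ : A → S) (u : List A)
    (e : (WithOne S × WithOne S) × A × (WithOne S × WithOne S)) : Prop :=
  ∃ u₁ u₂ : List A, u = u₁ ++ e.2.1 :: u₂ ∧
    e.1 = (phiStar φ u₁, phiStar φ (e.2.1 :: u₂)) ∧
    e.2.2 = (phiStar φ (u₁ ++ [e.2.1]), phiStar φ u₂)

/-- `e` is a transition edge traversed by `p_u`: an edge of `p_u` whose endpoints lie in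
distinct strongly connected components of `Γ_φ`. -/
def IsTransitionOfPath [Semigroup S] (φ : A → S) (u : List A)
    (e : (WithOne S × WithOne S) × A × (WithOne S × WithOne S)) : Prop :=
  EdgeOfPath φ u e ∧ ¬ SameSCC φ e.1 e.2.2

/-- The two-sided Karnofsky–Rhodes congruence `u ≡_φ v`: same image under `φ` and same set
of transition edges. -/
def KRCong [Semigroup S] (φ : A → S) (u v : List A) : Prop :=
  phiStar φ u = phiStar φ v ∧
  ∀ e, IsTransitionOfPath φ u e ↔ IsTransitionOfPath φ v e


section Aux

variable [Semigroup S] (φ : A → S)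

lemma phiStar_append' (u v : List A) :
    phiStar φ (u ++ v) = phiStar φ u * phiStar φ v := by
  simp [phiStar, List.map_append, List.prod_append]

lemma phiStar_cons' (a : A) (u : List A) :
    phiStar φ (a :: u) = (φ a : WithOne S) * phiStar φ u := by
  simp [phiStar]

lemma reach_trans' {p q r} (h1 : Reach φ p q) (h2 : Reach φ q r) : Reach φ p r := by
  obtain ⟨w1, hw1a, hw1b⟩ := h1
  obtain ⟨w2, hw2a, hw2b⟩ := h2
  exact ⟨w1 ++ w2, by rw [phiStar_append', ← mul_assoc, hw1a, hw2a],
    by rw [phiStar_append', mul_assoc, ← hw2b, hw1b]⟩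

lemma scc_symm' {p q} (h : SameSCC φ p q) : SameSCC φ q p := ⟨h.2, h.1⟩

lemma scc_trans' {p q r} (h1 : SameSCC φ p q) (h2 : SameSCC φ q r) : SameSCC φ p r :=
  ⟨reach_trans' φ h1.1 h2.1, reach_trans' φ h2.2 h1.2⟩

lemma yseg' {e : S} (he : e * e = e) (y₁ y₂ : List A)
    (h : phiStar φ y₁ * phiStar φ y₂ = (e : WithOne S)) :
    SameSCC φ ((e : WithOne S), (e : WithOne S))
      ((e : WithOne S) * phiStar φ y₁, phiStar φ y₂ * (e : WithOne S)) := by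
  have hee : (e : WithOne S) * e = e := by rw [← WithOne.coe_mul, he]
  constructor
  · exact ⟨y₁, rfl, by rw [← mul_assoc, h, hee]⟩
  · exact ⟨y₂, by rw [mul_assoc, h, hee], rfl⟩

lemma split_cases' {l1 l2 u₁ u₂ : List A} {a : A} (h : l1 ++ l2 = u₁ ++ a :: u₂) :
    (∃ t, l1 = u₁ ++ a :: t ∧ u₂ = t ++ l2) ∨ (∃ s, u₁ = l1 ++ s ∧ l2 = s ++ a :: u₂) := by
  rcases List.append_eq_append_iff.mp h with ⟨w, hw1, hw2⟩ | ⟨w, hw1, hw2⟩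
  · exact Or.inr ⟨w, hw1, hw2⟩
  · cases w with
    | nil => exact Or.inr ⟨[], by simp [hw1], hw2.symm⟩
    | cons b t =>
      rw [List.cons_append] at hw2
      obtain ⟨rfl, hu⟩ := List.cons.injEq _ _ _ _ ▸ hw2
      exact Or.inl ⟨t, hw1, hu⟩

end Aux

/-- In the Karnofsky–Rhodes expansion, the preimage of an idempotent `e` of `S` satisfies
the identity `xyz = xz`. -/
theorem kr_preimage_of_idempotent_satisfies_xyz_eq_xz [Finite S] [Semigroup S]
    (φ : A → S) (hφ : PlusSurj φ) (e : S) (he : e * e = e)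
    (x y z : List A) (hx : x ≠ []) (hy : y ≠ []) (hz : z ≠ [])
    (hxe : phiStar φ x = (e : WithOne S)) (hye : phiStar φ y = (e : WithOne S))
    (hze : phiStar φ z = (e : WithOne S)) :
    KRCong φ (x ++ y ++ z) (x ++ z) := by
  have hee : (e : WithOne S) * e = (e : WithOne S) := by rw [← WithOne.coe_mul, he]
  have hee2 : ∀ w : WithOne S, (e : WithOne S) * ((e : WithOne S) * w) = (e : WithOne S) * w :=
    fun w => by rw [← mul_assoc, hee]
  have hnil : phiStar φ ([] : List A) = 1 := rfl
  constructor
  · simp [phiStar_append', hxe, hye, hze, hee, hee2, mul_assoc]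
  intro E
  constructor
  · rintro ⟨⟨u₁, u₂, hw, h1, h2⟩, hns⟩
    rw [List.append_assoc] at hw
    rcases split_cases' hw with ⟨t, hx1, hu2⟩ | ⟨s, hu1, hyz⟩
    · refine ⟨⟨u₁, t ++ z, ?_, ?_, ?_⟩, hns⟩
      · simp [hx1]
      · simp [h1, hu2, phiStar_append', phiStar_cons', hxe, hye, hze, hee, hee2, mul_assoc]
      · simp [h2, hu2, phiStar_append', phiStar_cons', hnil, hxe, hye, hze, hee, hee2,
          mul_assoc]
    · rcases split_cases' hyz with ⟨t, hy1, hu2⟩ | ⟨s', hs, hz1⟩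
      · exfalso
        apply hns
        have h1' : E.1 = ((e : WithOne S) * phiStar φ s,
            phiStar φ (E.2.1 :: t) * (e : WithOne S)) := by
          simp [h1, hu1, hu2, phiStar_append', phiStar_cons', hxe, hze, mul_assoc]
        have h2' : E.2.2 = ((e : WithOne S) * phiStar φ (s ++ [E.2.1]),
            phiStar φ t * (e : WithOne S)) := by
          simp [h2, hu1, hu2, phiStar_append', phiStar_cons', hnil, hxe, hze, mul_assoc]
        rw [h1', h2']
        have hy1' : phiStar φ s * phiStar φ (E.2.1 :: t) = (e : WithOne S) := by
          rw [← phiStar_append', ← hy1, hye]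
        have hy2' : phiStar φ (s ++ [E.2.1]) * phiStar φ t = (e : WithOne S) := by
          rw [← phiStar_append', show (s ++ [E.2.1]) ++ t = s ++ E.2.1 :: t by simp,
            ← hy1, hye]
        exact scc_trans' φ (scc_symm' φ (yseg' φ he s (E.2.1 :: t) hy1'))
          (yseg' φ he (s ++ [E.2.1]) t hy2')
      · refine ⟨⟨x ++ s', u₂, ?_, ?_, ?_⟩, hns⟩
        · simp [hz1]
        · simp [h1, hu1, hs, phiStar_append', phiStar_cons', hxe, hye, hze, hee, hee2,
            mul_assoc]
        · simp [h2, hu1, hs, phiStar_append', phiStar_cons', hnil, hxe, hye, hze, hee, hee2,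
            mul_assoc]
  · rintro ⟨⟨u₁, u₂, hw, h1, h2⟩, hns⟩
    rcases split_cases' hw with ⟨t, hx1, hu2⟩ | ⟨s, hu1, hz1⟩
    · refine ⟨⟨u₁, t ++ (y ++ z), ?_, ?_, ?_⟩, hns⟩
      · simp [hx1]
      · simp [h1, hu2, phiStar_append', phiStar_cons', hxe, hye, hze, hee, hee2, mul_assoc]
      · simp [h2, hu2, phiStar_append', phiStar_cons', hnil, hxe, hye, hze, hee, hee2,
          mul_assoc]
    · refine ⟨⟨x ++ (y ++ s), u₂, ?_, ?_, ?_⟩, hns⟩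
      · simp [hz1]
      · simp [h1, hu1, phiStar_append', phiStar_cons', hxe, hye, hze, hee, hee2, mul_assoc]
      · simp [h2, hu1, phiStar_append', phiStar_cons', hnil, hxe, hye, hze, hee, hee2,
          mul_assoc]
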